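/- Let H = ℝ ⊕ ℝi ⊕ ℝj ⊕ ℝk be the real quaternions and let f(z) = z² + a z b + c with a, b, c ∈ H all nonzero, regarded as a two-sided polynomial (evaluation: f(z₀) = z₀² + a z₀ b + c). Then the number of purely imaginary roots of f with pairwise distinct norms is at most two. -/
import Mathlib

open Quaternion

lemma sq_eq_neg_normSq_of_im {z : Quaternion ℝ} (h : z.re = 0) :
    z ^ 2 = -((Quaternion.normSq z : ℝ) : Quaternion ℝ) := by
  have hstar : star z = -z := by
    ext <;> simp [h]
  calc z ^ 2 = -(star z * z) := by rw [hstar, sq, neg_mul, neg_neg]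
    _ = -((Quaternion.normSq z : ℝ) : Quaternion ℝ) := by
        rw [Quaternion.star_mul_self]

/-- A two-sided quadratic quaternion polynomial `z² + a z b + c` (with
`a, b, c ≠ 0`) has at most two purely imaginary roots with pairwise distinct
norms. -/
theorem twoSided_quadratic_pure_imaginary_roots
    (a b c : Quaternion ℝ) (ha : a ≠ 0) (hb : b ≠ 0) (hc : c ≠ 0)
    (z₁ z₂ z₃ : Quaternion ℝ)
    (h₁im : z₁.re = 0) (h₂im : z₂.re = 0) (h₃im : z₃.re = 0)
    (h₁ : z₁ ^ 2 + a * z₁ * b + c = 0)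
    (h₂ : z₂ ^ 2 + a * z₂ * b + c = 0)
    (h₃ : z₃ ^ 2 + a * z₃ * b + c = 0)
    (h12 : Quaternion.normSq z₁ ≠ Quaternion.normSq z₂)
    (h13 : Quaternion.normSq z₁ ≠ Quaternion.normSq z₃)
    (h23 : Quaternion.normSq z₂ ≠ Quaternion.normSq z₃) :
    False := by
  set N₁ : ℝ := Quaternion.normSq z₁ with hN₁
  set N₂ : ℝ := Quaternion.normSq z₂ with hN₂
  set N₃ : ℝ := Quaternion.normSq z₃ with hN₃
  have e₁ : z₁ ^ 2 = -((N₁ : Quaternion ℝ)) := sq_eq_neg_normSq_of_im h₁im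
  have e₂ : z₂ ^ 2 = -((N₂ : Quaternion ℝ)) := sq_eq_neg_normSq_of_im h₂im
  have e₃ : z₃ ^ 2 = -((N₃ : Quaternion ℝ)) := sq_eq_neg_normSq_of_im h₃im
  -- express zᵢ = a⁻¹ * (Nᵢ - c) * b⁻¹
  have key : ∀ (z : Quaternion ℝ) (N : ℝ),
      z ^ 2 = -((N : Quaternion ℝ)) → z ^ 2 + a * z * b + c = 0 →
      z = a⁻¹ * ((N : Quaternion ℝ) - c) * b⁻¹ := by
    intro z N he h
    have hz : a * z * b = (N : Quaternion ℝ) - c := by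
      apply eq_of_sub_eq_zero
      rw [show a * z * b - ((N : Quaternion ℝ) - c)
          = z ^ 2 + a * z * b + c by rw [he]; abel]
      exact h
    have h2 : a⁻¹ * (a * z * b) * b⁻¹ = a⁻¹ * ((N : Quaternion ℝ) - c) * b⁻¹ := by
      rw [hz]
    rwa [show a⁻¹ * (a * z * b) * b⁻¹ = (a⁻¹ * a) * z * (b * b⁻¹) by
        simp only [mul_assoc],
      inv_mul_cancel₀ ha, mul_inv_cancel₀ hb, one_mul, mul_one] at h2
  have k₁ := key z₁ N₁ e₁ h₁
  have k₂ := key z₂ N₂ e₂ h₂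
  have k₃ := key z₃ N₃ e₃ h₃
  set x : Quaternion ℝ := a⁻¹ with hx
  set y : Quaternion ℝ := b⁻¹ with hy
  have hxy : x * y ≠ 0 :=
    mul_ne_zero (inv_ne_zero ha) (inv_ne_zero hb)
  set q : ℝ → Quaternion ℝ := fun N => x * ((N : Quaternion ℝ) - c) * y with hq
  have E : ∀ N : ℝ, ∀ z : Quaternion ℝ, z ^ 2 = -((N : Quaternion ℝ)) →
      z = q N → q N * q N + (N : Quaternion ℝ) = 0 := by
    intro N z he hz
    rw [← hz, ← sq, he, neg_add_cancel]
  have E₁ := E N₁ z₁ e₁ k₁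
  have E₂ := E N₂ z₂ e₂ k₂
  have E₃ := E N₃ z₃ e₃ k₃
  have qdiff : ∀ M N : ℝ, q M - q N = ((M - N : ℝ) : Quaternion ℝ) * (x * y) := by
    intro M N
    rw [show (((M - N : ℝ)) : Quaternion ℝ) * (x * y)
        = x * ((((M - N : ℝ)) : Quaternion ℝ) * y) by
      rw [← mul_assoc, Quaternion.coe_commutes, mul_assoc]]
    simp only [hq]
    rw [Quaternion.coe_sub]
    noncomm_ring
  have lin : ∀ M N : ℝ, M ≠ N →
      q M * q M + (M : Quaternion ℝ) = 0 →
      q N * q N + (N : Quaternion ℝ) = 0 →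
      q M * (x * y) + (x * y) * q N + 1 = 0 := by
    intro M N hMN eM eN
    have hsub : q M * (q M - q N) + (q M - q N) * q N
        + ((M : Quaternion ℝ) - (N : Quaternion ℝ)) = 0 := by
      rw [show q M * (q M - q N) + (q M - q N) * q N
          + ((M : Quaternion ℝ) - (N : Quaternion ℝ))
          = (q M * q M + (M : Quaternion ℝ)) - (q N * q N + (N : Quaternion ℝ)) by
        noncomm_ring]
      rw [eM, eN, sub_zero]
    rw [qdiff M N, ← Quaternion.coe_sub] at hsub
    have hd : (((M - N : ℝ)) : Quaternion ℝ) ≠ 0 := by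
      simpa [sub_eq_zero] using hMN
    have factored : (((M - N : ℝ)) : Quaternion ℝ)
        * (q M * (x * y) + (x * y) * q N + 1) = 0 := by
      calc (((M - N : ℝ)) : Quaternion ℝ) * (q M * (x * y) + (x * y) * q N + 1)
          = (((M - N : ℝ)) : Quaternion ℝ) * (q M * (x * y))
            + (((M - N : ℝ)) : Quaternion ℝ) * ((x * y) * q N)
            + (((M - N : ℝ)) : Quaternion ℝ) := by noncomm_ring
        _ = q M * ((((M - N : ℝ)) : Quaternion ℝ) * (x * y))
            + ((((M - N : ℝ)) : Quaternion ℝ) * (x * y)) * q N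
            + (((M - N : ℝ)) : Quaternion ℝ) := by
            rw [show (((M - N : ℝ)) : Quaternion ℝ) * (q M * (x * y))
                = q M * ((((M - N : ℝ)) : Quaternion ℝ) * (x * y)) by
              rw [← mul_assoc, Quaternion.coe_commutes, mul_assoc]]
            simp only [mul_assoc]
        _ = 0 := hsub
    rcases mul_eq_zero.mp factored with h | h
    · exact absurd h hd
    · exact h
  have L₂ := lin N₁ N₂ h12 E₁ E₂
  have L₃ := lin N₁ N₃ h13 E₁ E₃
  have h' : x * y * q N₂ = x * y * q N₃ :=
    add_left_cancel (add_right_cancel (L₂.trans L₃.symm))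
  have hzero : (x * y) * (q N₂ - q N₃) = 0 := by
    rw [mul_sub, h', sub_self]
  rw [qdiff N₂ N₃] at hzero
  have hd : (((N₂ - N₃ : ℝ)) : Quaternion ℝ) ≠ 0 := by
    simpa [sub_eq_zero] using h23
  rw [show (x * y) * ((((N₂ - N₃ : ℝ)) : Quaternion ℝ) * (x * y))
      = (((N₂ - N₃ : ℝ)) : Quaternion ℝ) * ((x * y) * (x * y)) by
    rw [← mul_assoc, ← Quaternion.coe_commutes, mul_assoc]] at hzero
  rcases mul_eq_zero.mp hzero with h | h
  · exact hd h
  · exact hxy (by rcases mul_eq_zero.mp h with h' | h' <;> exact h')
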